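/- Let R ⊆ ℕ be infinite with increasing enumeration (r_n), let w be a good weight supported on R (indexed by n), and let σ : ℕ → ℝ be a decreasing nonnegative sequence (σ(1) ≥ σ(2) ≥ ⋯ ≥ 0). Set v := σ·w (i.e. v(n) = σ(n)w(n)) and assume Σ_n v(n) = ∞. Then v is a good weight on R and μ_{v,β} = μ_{w,β} for every β ∈ ℝ. -/

import Mathlib

open MeasureTheory Filter Topology
open scoped BigOperators

noncomputable section

open Classical in
/-- `S(N) = S ∩ {1,…,N}` as a `Finset`. -/
def initSeg (S : Set ℕ) (N : ℕ) : Finset ℕ := (Finset.Icc 1 N).filter (· ∈ S)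

/-- The average `(1/#S(N)) ∑_{s ∈ S(N)} f (sα mod 1)`. -/
def empAvg (S : Set ℕ) (α : ℝ) (N : ℕ) (f : UnitAddCircle → ℝ) : ℝ :=
  ((initSeg S N).card : ℝ)⁻¹ * ∑ s ∈ initSeg S N, f (((s : ℝ) * α : ℝ) : UnitAddCircle)

/-- `μ` is the weak limit of the empirical measures `(1/#S(N)) ∑_{s ∈ S(N)} δ_{sα mod 1}`. -/
def IsLimitMeasure (S : Set ℕ) (α : ℝ) (μ : Measure UnitAddCircle) : Prop :=
  ∀ f : C(UnitAddCircle, ℝ),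
    Tendsto (fun N => empAvg S α N (fun x => f x)) atTop (𝓝 (∫ x, f x ∂μ))

/-- A good set: infinite, and for every `α` the empirical measures converge weakly
to some (probability) limit measure `μ_{S,α}`. -/
def IsGoodSet (S : Set ℕ) : Prop :=
  S.Infinite ∧ ∀ α : ℝ, ∃ μ : Measure UnitAddCircle, IsProbabilityMeasure μ ∧ IsLimitMeasure S α μ

/-- `R` is sublacunary: `log N / #R(N) → 0`. -/
def Sublacunary (R : Set ℕ) : Prop :=
  Tendsto (fun N : ℕ => Real.log N / ((initSeg R N).card : ℝ)) atTop (𝓝 0)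

open Classical in
/-- `#{n < N : r_n ∈ S}` where `(r_n)` is the increasing (0-indexed) enumeration of `R`. -/
def relCount (R S : Set ℕ) (N : ℕ) : ℕ :=
  ((Finset.range N).filter (fun n => Nat.nth (· ∈ R) n ∈ S)).card

/-- Weighted average `(1/∑_{n<N} w n) ∑_{n<N} w n · f (r_n β mod 1)`. -/
def wAvg (R : Set ℕ) (w : ℕ → ℝ) (β : ℝ) (N : ℕ) (f : UnitAddCircle → ℝ) : ℝ :=
  (∑ n ∈ Finset.range N, w n)⁻¹ *
    ∑ n ∈ Finset.range N, w n * f (((Nat.nth (· ∈ R) n : ℝ) * β : ℝ) : UnitAddCircle)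

/-- `μ` is the weak limit of the `w`-weighted empirical measures along `R` at `β`. -/
def IsWeightLimit (R : Set ℕ) (w : ℕ → ℝ) (β : ℝ) (μ : Measure UnitAddCircle) : Prop :=
  ∀ f : C(UnitAddCircle, ℝ),
    Tendsto (fun N => wAvg R w β N (fun x => f x)) atTop (𝓝 (∫ x, f x ∂μ))

/-- A good weight on `R` (indexed by the increasing enumeration of `R`). -/
def IsGoodWeight (R : Set ℕ) (w : ℕ → ℝ) : Prop :=
  (∀ n, 0 ≤ w n) ∧ ¬ Summable w ∧
    ∀ β : ℝ, ∃ μ : Measure UnitAddCircle, IsProbabilityMeasure μ ∧ IsWeightLimit R w β μ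

/-- Besicovitch-type seminorm `‖f‖₁ = limsup_N (1/N) ∑_{n<N} |f n|`. -/
def besic (f : ℕ → ℝ) : ℝ := Filter.limsup (fun N => (∑ n ∈ Finset.range N, |f n|) / N) atTop

/-- An integrable weight: approximable in `‖·‖₁` by bounded good weights. -/
def IntegrableWeight (R : Set ℕ) (w : ℕ → ℝ) : Prop :=
  ∀ ε > 0, ∃ v : ℕ → ℝ, IsGoodWeight R v ∧ (∃ C, ∀ n, v n ≤ C) ∧
    besic (fun n => v n - w n) < ε

/-- Total variation distance between two finite Borel measures on the torus. -/
def varDist (μ ν : Measure UnitAddCircle) : ℝ :=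
  ⨆ B : Set UnitAddCircle, ⨆ _ : MeasurableSet B, |(μ B).toReal - (ν B).toReal|

/-- `e(θ) = exp(2πiθ)`. -/
def eC (θ : ℝ) : ℂ := Complex.exp (2 * Real.pi * Complex.I * θ)

/-- `w(R(N)) = ∑_{r ∈ R(N)} w r`. -/
def wSum (R : Set ℕ) (w : ℕ → ℝ) (N : ℕ) : ℝ := ∑ r ∈ initSeg R N, w r

/-- `μ` is the weak limit of `(1/w(R(N))) ∑_{r ∈ R(N)} w r · δ_{rβ mod 1}`. -/
def IsWeightLimitR (R : Set ℕ) (w : ℕ → ℝ) (β : ℝ) (μ : Measure UnitAddCircle) : Prop :=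
  ∀ f : C(UnitAddCircle, ℝ),
    Tendsto
      (fun N => (wSum R w N)⁻¹ * ∑ r ∈ initSeg R N, w r * f (((r : ℝ) * β : ℝ) : UnitAddCircle))
      atTop (𝓝 (∫ x, f x ∂μ))

/-- `f : ℕ → ℂ` has mean `c`. -/
def HasMean (f : ℕ → ℂ) (c : ℂ) : Prop :=
  Tendsto (fun N => (∑ n ∈ Finset.range N, f n) / (N : ℂ)) atTop (𝓝 c)

/-- The seminorm `‖f‖_M = limsup_N |(1/N) ∑_{n<N} f n|`. -/
def meanSeminorm (f : ℕ → ℂ) : ℝ :=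
  Filter.limsup (fun N => ‖(∑ n ∈ Finset.range N, f n) / (N : ℂ)‖) atTop

end


section Aux

open Filter Finset Topology

/-- Key Toeplitz-type lemma: multiplying by a decreasing nonnegative sequence preserves
weighted Cesàro limits, provided the new weighted sums diverge. -/
private lemma key_toeplitz (w σ F : ℕ → ℝ) (hw0 : ∀ n, 0 ≤ w n) (hσ0 : ∀ n, 0 ≤ σ n)
    (hσd : ∀ n, σ (n + 1) ≤ σ n) (L : ℝ)
    (hlim : Tendsto (fun N => (∑ n ∈ range N, w n)⁻¹ * ∑ n ∈ range N, w n * F n)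
      atTop (𝓝 L))
    (hV : Tendsto (fun N => ∑ n ∈ range N, σ n * w n) atTop atTop) :
    Tendsto (fun N => (∑ n ∈ range N, σ n * w n)⁻¹ * ∑ n ∈ range N, σ n * (w n * F n))
      atTop (𝓝 L) := by
  set W : ℕ → ℝ := fun N => ∑ n ∈ range N, w n with hWdef
  set A : ℕ → ℝ := fun N => ∑ n ∈ range N, w n * F n with hAdef
  set V : ℕ → ℝ := fun N => ∑ n ∈ range N, σ n * w n with hVdef
  set T : ℕ → ℝ := fun N => ∑ n ∈ range N, σ n * (w n * F n) with hTdef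
  set E : ℕ → ℝ := fun N => A N - L * W N with hEdef
  have hWnn : ∀ N, 0 ≤ W N := fun N => Finset.sum_nonneg fun n _ => hw0 n
  have hσdiff : ∀ i : ℕ, 0 ≤ σ i - σ (i + 1) := fun i => by linarith [hσd i]
  -- Step 1: smallness of `E`
  have step1 : ∀ ε > 0, ∃ M₀, ∀ N ≥ M₀, |E N| ≤ ε * W N := by
    intro ε hε
    obtain ⟨M₀, hM₀⟩ := (Metric.tendsto_atTop.mp hlim) ε hε
    refine ⟨M₀, fun N hN => ?_⟩
    rcases eq_or_lt_of_le (hWnn N) with h0 | hpos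
    · have hz : ∀ n ∈ range N, w n = 0 :=
        (Finset.sum_eq_zero_iff_of_nonneg (fun n _ => hw0 n)).mp h0.symm
      have hA0 : A N = 0 := Finset.sum_eq_zero fun n hn => by rw [hz n hn, zero_mul]
      simp [hEdef, hA0, ← h0]
    · have hd := hM₀ N hN
      rw [Real.dist_eq] at hd
      have hEeq : E N = W N * ((W N)⁻¹ * A N - L) := by
        field_simp [hEdef]
        ring
      rw [hEeq, abs_mul, abs_of_pos hpos, mul_comm ε (W N)]
      exact mul_le_mul_of_nonneg_left hd.le (hWnn N)
  -- Abel summation identity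
  have abel : ∀ (g : ℕ → ℝ) (N : ℕ),
      ∑ n ∈ range N, σ n * g n =
        σ (N - 1) * (∑ n ∈ range N, g n)
          + ∑ i ∈ range (N - 1), (σ i - σ (i + 1)) * (∑ n ∈ range (i + 1), g n) := by
    intro g N
    have h := Finset.sum_range_by_parts σ g N
    simp only [smul_eq_mul] at h
    rw [h, sub_eq_add_neg, ← Finset.sum_neg_distrib]
    congr 1
    exact Finset.sum_congr rfl fun i _ => by ring
  -- Main estimate
  have step3 : ∀ ε > 0, ∃ M₀ C₀, 0 ≤ C₀ ∧ ∀ N ≥ M₀ + 1, |T N - L * V N| ≤ ε * V N + C₀ := by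
    intro ε hε
    obtain ⟨M₀, hM₀⟩ := step1 ε hε
    set c : ℕ → ℝ := fun i => if i < M₀ then |E (i + 1)| else 0 with hcdef
    have hcnn : ∀ i, 0 ≤ c i := fun i => by
      by_cases h : i < M₀ <;> simp [hcdef, h]
    set C₀ : ℝ := ∑ i ∈ range M₀, (σ i - σ (i + 1)) * c i with hC₀def
    have hC₀nn : 0 ≤ C₀ :=
      Finset.sum_nonneg fun i _ => mul_nonneg (hσdiff i) (hcnn i)
    refine ⟨M₀, C₀, hC₀nn, fun N hN => ?_⟩
    have hN1 : M₀ ≤ N - 1 := by omega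
    have hNM : M₀ ≤ N := by omega
    -- Abel applied to the error terms
    have hEsum : ∀ M : ℕ, ∑ n ∈ range M, (w n * F n - L * w n) = E M := by
      intro M
      rw [Finset.sum_sub_distrib, ← Finset.mul_sum]
    have hTV : T N - L * V N =
        σ (N - 1) * E N + ∑ i ∈ range (N - 1), (σ i - σ (i + 1)) * E (i + 1) := by
      have h1 := abel (fun n => w n * F n - L * w n) N
      simp only [hEsum] at h1
      have h3 : ∑ n ∈ range N, σ n * (w n * F n - L * w n) = T N - L * V N := by
        have he : ∀ n, σ n * (w n * F n - L * w n)
            = σ n * (w n * F n) - L * (σ n * w n) := fun n => by ring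
        simp only [he, Finset.sum_sub_distrib, ← Finset.mul_sum]
        rfl
      rw [← h3, h1]
    -- triangle inequality
    have htri : |T N - L * V N| ≤
        σ (N - 1) * |E N| + ∑ i ∈ range (N - 1), (σ i - σ (i + 1)) * |E (i + 1)| := by
      rw [hTV]
      refine (abs_add_le _ _).trans (add_le_add ?_ ?_)
      · rw [abs_mul, abs_of_nonneg (hσ0 _)]
      · refine (Finset.abs_sum_le_sum_abs _ _).trans ?_
        refine Finset.sum_le_sum fun i _ => ?_
        rw [abs_mul, abs_of_nonneg (hσdiff i)]
    -- bound each error term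
    have hbound : ∀ i, |E (i + 1)| ≤ ε * W (i + 1) + c i := by
      intro i
      by_cases h : i < M₀
      · simp only [hcdef, if_pos h]
        have : 0 ≤ ε * W (i + 1) := mul_nonneg hε.le (hWnn _)
        linarith
      · simp only [hcdef, if_neg h]
        have : M₀ ≤ i + 1 := by omega
        linarith [hM₀ (i + 1) this]
    have hsum1 : ∑ i ∈ range (N - 1), (σ i - σ (i + 1)) * |E (i + 1)| ≤
        ε * (∑ i ∈ range (N - 1), (σ i - σ (i + 1)) * W (i + 1)) + C₀ := by
      have h1 : ∑ i ∈ range (N - 1), (σ i - σ (i + 1)) * |E (i + 1)| ≤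
          ∑ i ∈ range (N - 1), ((σ i - σ (i + 1)) * (ε * W (i + 1)) +
            (σ i - σ (i + 1)) * c i) := by
        refine Finset.sum_le_sum fun i _ => ?_
        have := mul_le_mul_of_nonneg_left (hbound i) (hσdiff i)
        linarith [this]
      rw [Finset.sum_add_distrib] at h1
      have h2 : ∑ i ∈ range (N - 1), (σ i - σ (i + 1)) * c i = C₀ := by
        rw [hC₀def]
        refine (Finset.sum_subset (Finset.range_subset_range.mpr hN1) ?_).symm
        intro i _ hi
        have : ¬ i < M₀ := by simpa using hi
        simp [hcdef, this]
      rw [h2] at h1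
      calc ∑ i ∈ range (N - 1), (σ i - σ (i + 1)) * |E (i + 1)|
          ≤ (∑ i ∈ range (N - 1), (σ i - σ (i + 1)) * (ε * W (i + 1))) + C₀ := h1
        _ = ε * (∑ i ∈ range (N - 1), (σ i - σ (i + 1)) * W (i + 1)) + C₀ := by
            rw [Finset.mul_sum]
            congr 1
            exact Finset.sum_congr rfl fun i _ => by ring
    have hEN : σ (N - 1) * |E N| ≤ ε * (σ (N - 1) * W N) := by
      have := mul_le_mul_of_nonneg_left (hM₀ N hNM) (hσ0 (N - 1))
      linarith [this]
    have habelV : σ (N - 1) * W N + ∑ i ∈ range (N - 1), (σ i - σ (i + 1)) * W (i + 1)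
        = V N := (abel w N).symm
    calc |T N - L * V N|
        ≤ σ (N - 1) * |E N| + ∑ i ∈ range (N - 1), (σ i - σ (i + 1)) * |E (i + 1)| := htri
      _ ≤ ε * (σ (N - 1) * W N) +
          (ε * (∑ i ∈ range (N - 1), (σ i - σ (i + 1)) * W (i + 1)) + C₀) :=
          add_le_add hEN hsum1
      _ = ε * (σ (N - 1) * W N + ∑ i ∈ range (N - 1), (σ i - σ (i + 1)) * W (i + 1)) + C₀ := by
          ring
      _ = ε * V N + C₀ := by rw [habelV]
  -- conclude
  rw [Metric.tendsto_atTop]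
  intro ε' hε'
  obtain ⟨M₀, C₀, hC₀nn, hmain⟩ := step3 (ε' / 2) (by linarith)
  obtain ⟨N₂, hN₂⟩ := Filter.eventually_atTop.mp (hV.eventually_ge_atTop ((2 * C₀ + 2) / ε'))
  refine ⟨max (M₀ + 1) N₂, fun N hN => ?_⟩
  have hNa : M₀ + 1 ≤ N := le_trans (le_max_left _ _) hN
  have hNb : N₂ ≤ N := le_trans (le_max_right _ _) hN
  have hVge : (2 * C₀ + 2) / ε' ≤ V N := hN₂ N hNb
  have hVpos : 0 < V N := lt_of_lt_of_le (by positivity) hVge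
  have hVmul : 2 * C₀ + 2 ≤ V N * ε' := by
    rw [div_le_iff₀ hε'] at hVge
    linarith
  have hkey := hmain N hNa
  rw [Real.dist_eq]
  have heq : (V N)⁻¹ * T N - L = (T N - L * V N) / V N := by
    field_simp
  rw [heq, abs_div, abs_of_pos hVpos]
  rw [div_lt_iff₀ hVpos]
  have h2 : 2 * C₀ < ε' * V N := by linarith
  calc |T N - L * V N| ≤ ε' / 2 * V N + C₀ := hkey
    _ < ε' * V N := by linarith

end Aux

/-- multiplying a good weight on `R` by a decreasing nonnegative sequence with
divergent weighted sums yields a good weight representing the same measures everywhere. -/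
theorem decreasing_weights_preserve_limit_measures (R : Set ℕ) (hR : R.Infinite)
    (w : ℕ → ℝ) (hw : IsGoodWeight R w)
    (σ : ℕ → ℝ) (hσ0 : ∀ n, 0 ≤ σ n) (hσdec : ∀ n, σ (n + 1) ≤ σ n)
    (hv : ¬ Summable (fun n => σ n * w n)) :
    IsGoodWeight R (fun n => σ n * w n) ∧
    ∀ β : ℝ, ∀ μ : MeasureTheory.Measure UnitAddCircle,
      IsWeightLimit R w β μ → IsWeightLimit R (fun n => σ n * w n) β μ := by
  obtain ⟨hw0, hwns, hwgood⟩ := hw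
  have hv0 : ∀ n, 0 ≤ σ n * w n := fun n => mul_nonneg (hσ0 n) (hw0 n)
  have hV : Filter.Tendsto (fun N => ∑ n ∈ Finset.range N, σ n * w n) Filter.atTop Filter.atTop :=
    (not_summable_iff_tendsto_nat_atTop_of_nonneg hv0).mp hv
  have main : ∀ β : ℝ, ∀ μ : MeasureTheory.Measure UnitAddCircle,
      IsWeightLimit R w β μ → IsWeightLimit R (fun n => σ n * w n) β μ := by
    intro β μ hμ f
    have hf := hμ f
    unfold wAvg at hf ⊢
    have hassoc : ∀ N : ℕ, ∑ n ∈ Finset.range N,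
        (σ n * w n) * (f (((Nat.nth (· ∈ R) n : ℝ) * β : ℝ) : UnitAddCircle))
        = ∑ n ∈ Finset.range N,
          σ n * (w n * (f (((Nat.nth (· ∈ R) n : ℝ) * β : ℝ) : UnitAddCircle))) := fun N =>
      Finset.sum_congr rfl fun n _ => mul_assoc _ _ _
    simp only [hassoc]
    exact key_toeplitz w σ
      (fun n => f (((Nat.nth (· ∈ R) n : ℝ) * β : ℝ) : UnitAddCircle))
      hw0 hσ0 hσdec _ hf hV
  refine ⟨⟨hv0, hv, fun β => ?_⟩, main⟩
  obtain ⟨μ, hμprob, hμlim⟩ := hwgood β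
  exact ⟨μ, hμprob, main β μ hμlim⟩
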